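/- Let {A_n}_{n≥1} be a sequence of d×d real matrices with all entries strictly positive, and for m ≥ 1 set C_m = ⋂_{n ≥ m} A_m A_{m+1} ⋯ A_n (ℝ₊^d), where ℝ₊^d is the cone of nonnegative vectors. Then each C_m contains a nonzero vector, and A_m C_{m+1} = C_m for every m. -/

import Mathlib

open Filter

/-- The forward product `P_m^n = A_m A_{m+1} ⋯ A_n`. -/
def fwdProd {d : ℕ} (A : ℕ → Matrix (Fin d) (Fin d) ℝ) (m n : ℕ) :
    Matrix (Fin d) (Fin d) ℝ :=
  ((List.range' m (n + 1 - m)).map A).prod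

/-- The nonnegative orthant `ℝ₊^d`. -/
def posCone (d : ℕ) : Set (Fin d → ℝ) := {x | ∀ i, 0 ≤ x i}

/-- The limiting cone `C_m = ⋂_{n ≥ m} A_m A_{m+1} ⋯ A_n (ℝ₊^d)`. -/
def limitCone {d : ℕ} (A : ℕ → Matrix (Fin d) (Fin d) ℝ) (m : ℕ) : Set (Fin d → ℝ) :=
  ⋂ n ∈ Set.Ici m, (fun x => (fwdProd A m n).mulVec x) '' posCone d

section Aux

variable {d : ℕ}

lemma mem_limitCone_iff {A : ℕ → Matrix (Fin d) (Fin d) ℝ} {m : ℕ} {y : Fin d → ℝ} :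
    y ∈ limitCone A m ↔ ∀ n, m ≤ n → y ∈ (fun x => (fwdProd A m n).mulVec x) '' posCone d := by
  simp [limitCone]

lemma isClosed_posCone : IsClosed (posCone d) := by
  have : posCone d = Set.Ici (0 : Fin d → ℝ) := by
    ext x; simp [posCone, Set.mem_Ici, Pi.le_def]
  rw [this]; exact isClosed_Ici

lemma mulVec_mem_posCone {P : Matrix (Fin d) (Fin d) ℝ} (hP : ∀ i j, 0 ≤ P i j)
    {x : Fin d → ℝ} (hx : x ∈ posCone d) : P.mulVec x ∈ posCone d := by
  intro i
  simp only [Matrix.mulVec, dotProduct]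
  exact Finset.sum_nonneg fun j _ => mul_nonneg (hP i j) (hx j)

lemma fwdProd_self (A : ℕ → Matrix (Fin d) (Fin d) ℝ) (m : ℕ) : fwdProd A m m = A m := by
  simp [fwdProd, List.range'_one]

lemma fwdProd_succ_right (A : ℕ → Matrix (Fin d) (Fin d) ℝ) {m n : ℕ} (h : m ≤ n) :
    fwdProd A m (n + 1) = fwdProd A m n * A (n + 1) := by
  unfold fwdProd
  have h1 : n + 1 + 1 - m = (n + 1 - m) + 1 := by omega
  have h2 : m + (n + 1 - m) = n + 1 := by omega
  rw [h1, List.range'_1_concat, h2, List.map_append, List.prod_append]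
  simp

lemma fwdProd_cons (A : ℕ → Matrix (Fin d) (Fin d) ℝ) {m n : ℕ} (h : m + 1 ≤ n) :
    fwdProd A m n = A m * fwdProd A (m + 1) n := by
  unfold fwdProd
  have h1 : n + 1 - m = (n + 1 - (m + 1)) + 1 := by omega
  rw [h1, List.range'_succ, List.map_cons, List.prod_cons]

lemma fwdProd_pos (hd : 0 < d) (A : ℕ → Matrix (Fin d) (Fin d) ℝ)
    (hA : ∀ k i j, 0 < A k i j) {m n : ℕ} (h : m ≤ n) :
    ∀ i j, 0 < fwdProd A m n i j := by
  haveI : Nonempty (Fin d) := Fin.pos_iff_nonempty.mp hd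
  induction n with
  | zero =>
    have hm : m = 0 := Nat.le_zero.mp h
    subst hm
    rw [fwdProd_self]
    exact hA 0
  | succ n ih =>
    rcases Nat.lt_or_ge n m with h' | h'
    · have : m = n + 1 := by omega
      subst this
      rw [fwdProd_self]
      exact hA _
    · rw [fwdProd_succ_right A h']
      intro i j
      rw [Matrix.mul_apply]
      exact Finset.sum_pos (fun k _ => mul_pos (ih h' i k) (hA _ k j)) Finset.univ_nonempty

lemma image_antitone (A : ℕ → Matrix (Fin d) (Fin d) ℝ)
    (hA : ∀ k i j, 0 < A k i j) (m : ℕ) {n n' : ℕ} (h1 : m ≤ n) (h2 : n ≤ n') :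
    (fun x => (fwdProd A m n').mulVec x) '' posCone d ⊆
      (fun x => (fwdProd A m n).mulVec x) '' posCone d := by
  induction n', h2 using Nat.le_induction with
  | base => exact subset_rfl
  | succ n' hn' ih =>
    refine subset_trans ?_ ih
    rintro y ⟨x, hx, rfl⟩
    refine ⟨(A (n' + 1)).mulVec x, mulVec_mem_posCone (fun i j => (hA _ i j).le) hx, ?_⟩
    simp only
    rw [Matrix.mulVec_mulVec, ← fwdProd_succ_right A (le_trans h1 hn')]

lemma continuous_mulVec (P : Matrix (Fin d) (Fin d) ℝ) :
    Continuous (fun z : Fin d → ℝ => P.mulVec z) := by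
  have := LinearMap.continuous_of_finiteDimensional P.mulVecLin
  simpa [Matrix.mulVecLin_apply, Matrix.coe_mulVecLin] using this

lemma isCompact_aux (hd : 0 < d) (P : Matrix (Fin d) (Fin d) ℝ) (hP : ∀ i j, 0 < P i j)
    (T : Set (Fin d → ℝ)) (hT : IsClosed T) (C : ℝ) (hC : ∀ y ∈ T, ∑ i, y i ≤ C) :
    IsCompact {z | z ∈ posCone d ∧ P.mulVec z ∈ T} := by
  haveI : Nonempty (Fin d) := Fin.pos_iff_nonempty.mp hd
  have hcont : Continuous (fun z : Fin d → ℝ => P.mulVec z) := by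
    have := LinearMap.continuous_of_finiteDimensional P.mulVecLin
    simpa [Matrix.mulVecLin_apply, Matrix.coe_mulVecLin] using this
  have hclosed : IsClosed {z | z ∈ posCone d ∧ P.mulVec z ∈ T} := by
    have : {z | z ∈ posCone d ∧ P.mulVec z ∈ T} = posCone d ∩ (fun z => P.mulVec z) ⁻¹' T := rfl
    rw [this]
    exact isClosed_posCone.inter (hT.preimage hcont)
  set c : ℝ := Finset.univ.inf' Finset.univ_nonempty (fun j => ∑ i, P i j) with hc_def
  have hc : 0 < c := by
    rw [hc_def, Finset.lt_inf'_iff]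
    exact fun j _ => Finset.sum_pos (fun i _ => hP i j) Finset.univ_nonempty
  refine IsCompact.of_isClosed_subset (isCompact_Icc (a := (0 : Fin d → ℝ))
    (b := fun _ => C / c)) hclosed ?_
  rintro z ⟨hz, hzT⟩
  have hsum : c * ∑ j, z j ≤ ∑ i, P.mulVec z i := by
    have : ∑ i, P.mulVec z i = ∑ j, (∑ i, P i j) * z j := by
      simp only [Matrix.mulVec, dotProduct]
      rw [Finset.sum_comm]
      simp [Finset.sum_mul]
    rw [this, Finset.mul_sum]
    apply Finset.sum_le_sum
    intro j _
    exact mul_le_mul_of_nonneg_right (Finset.inf'_le _ (Finset.mem_univ j)) (hz j)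
  have hsum2 : ∑ j, z j ≤ C / c := by
    rw [le_div_iff₀ hc, mul_comm]
    exact hsum.trans (hC _ hzT)
  constructor
  · intro j; exact hz j
  · intro j
    calc z j ≤ ∑ j', z j' := Finset.single_le_sum (fun j' _ => hz j') (Finset.mem_univ j)
    _ ≤ C / c := hsum2

end Aux

/-- For strictly positive matrices, each limiting cone `C_m`
contains a nonzero vector, and `A_m C_{m+1} = C_m` for every `m`. -/
theorem stmt9 {d : ℕ} (hd : 0 < d) (A : ℕ → Matrix (Fin d) (Fin d) ℝ)
    (hA : ∀ k i j, 0 < A k i j) :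
    ∀ m, (∃ v ∈ limitCone A m, v ≠ 0) ∧
      (fun x => (A m).mulVec x) '' limitCone A (m + 1) = limitCone A m := by
  haveI : Nonempty (Fin d) := Fin.pos_iff_nonempty.mp hd
  intro m
  constructor
  · -- nonzero vector in C_m
    set K : ℕ → Set (Fin d → ℝ) := fun n => (fun x => (fwdProd A m n).mulVec x) '' posCone d
      with hK
    set D : ℕ → Set (Fin d → ℝ) := fun n => K (m + n) ∩ {y | ∑ i, y i = 1} with hD
    have hDeq : ∀ n, D n = (fun z => (fwdProd A m (m + n)).mulVec z) ''
        {z | z ∈ posCone d ∧ (fwdProd A m (m + n)).mulVec z ∈ {y | ∑ i, y i = 1}} := by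
      intro n
      ext y
      constructor
      · rintro ⟨⟨z, hz, rfl⟩, hy⟩
        exact ⟨z, ⟨hz, hy⟩, rfl⟩
      · rintro ⟨z, ⟨hz, hs⟩, rfl⟩
        exact ⟨⟨z, hz, rfl⟩, hs⟩
    have hcont : ∀ n, Continuous (fun z : Fin d → ℝ => (fwdProd A m n).mulVec z) := by
      intro n
      have := LinearMap.continuous_of_finiteDimensional (fwdProd A m n).mulVecLin
      simpa [Matrix.mulVecLin_apply, Matrix.coe_mulVecLin] using this
    have hDcompact : ∀ n, IsCompact (D n) := by
      intro n
      rw [hDeq n]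
      refine IsCompact.image ?_ (hcont _)
      refine isCompact_aux hd _ (fwdProd_pos hd A hA (Nat.le_add_right m n)) _ ?_ 1 ?_
      · exact isClosed_eq (by continuity) continuous_const
      · intro y hy; exact le_of_eq hy
    have hDne : ∀ n, (D n).Nonempty := by
      intro n
      set P := fwdProd A m (m + n)
      set s : ℝ := ∑ i, ∑ j, P i j with hs_def
      have hs : 0 < s :=
        Finset.sum_pos (fun i _ => Finset.sum_pos
          (fun j _ => fwdProd_pos hd A hA (Nat.le_add_right m n) i j) Finset.univ_nonempty)
          Finset.univ_nonempty
      refine ⟨P.mulVec (fun _ => s⁻¹), ⟨⟨fun _ => s⁻¹, fun i => inv_nonneg.mpr hs.le, rfl⟩, ?_⟩⟩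
      show ∑ i, P.mulVec (fun _ => s⁻¹) i = 1
      simp only [Matrix.mulVec, dotProduct]
      simp only [← Finset.sum_mul]
      exact mul_inv_cancel₀ hs.ne'
    have hDdec : ∀ n, D (n + 1) ⊆ D n := by
      intro n
      exact Set.inter_subset_inter
        (image_antitone A hA m (Nat.le_add_right m n) (by omega)) subset_rfl
    obtain ⟨v, hv⟩ := IsCompact.nonempty_iInter_of_sequence_nonempty_isCompact_isClosed D
      hDdec hDne (hDcompact 0) (fun n => (hDcompact n).isClosed)
    simp only [Set.mem_iInter] at hv
    refine ⟨v, ?_, ?_⟩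
    · rw [mem_limitCone_iff]
      intro n hn
      have h1 := (hv (n - m)).1
      rwa [show m + (n - m) = n by omega] at h1
    · intro h0
      have h2 := (hv 0).2
      rw [h0] at h2
      simp only [Set.mem_setOf_eq, Pi.zero_apply, Finset.sum_const_zero] at h2
      exact zero_ne_one h2
  · apply Set.Subset.antisymm
    · rintro y ⟨x, hx, rfl⟩
      rw [mem_limitCone_iff] at hx ⊢
      intro n hn
      rcases Nat.eq_or_lt_of_le hn with rfl | hlt
      · have hxpos : x ∈ posCone d := by
          obtain ⟨z, hz, hzx⟩ := hx (m + 1) le_rfl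
          rw [← hzx]
          dsimp only
          rw [fwdProd_self]
          exact mulVec_mem_posCone (fun i j => (hA _ i j).le) hz
        exact ⟨x, hxpos, by dsimp only; rw [fwdProd_self]⟩
      · obtain ⟨z, hz, hzx⟩ := hx n hlt
        refine ⟨z, hz, ?_⟩
        dsimp only at hzx ⊢
        rw [fwdProd_cons A hlt, ← Matrix.mulVec_mulVec, hzx]
    · intro y hy
      have hy' := hy
      rw [mem_limitCone_iff] at hy'
      set F : ℕ → Set (Fin d → ℝ) := fun n =>
        {x | x ∈ (fun x => (fwdProd A (m + 1) (m + 1 + n)).mulVec x) '' posCone d ∧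
          (A m).mulVec x = y} with hF
      have hFeq : ∀ n, F n = (fun z => (fwdProd A (m + 1) (m + 1 + n)).mulVec z) ''
          {z | z ∈ posCone d ∧ (fwdProd A m (m + 1 + n)).mulVec z ∈ ({y} : Set (Fin d → ℝ))} := by
        intro n
        have hsplit : fwdProd A m (m + 1 + n) = A m * fwdProd A (m + 1) (m + 1 + n) :=
          fwdProd_cons A (by omega)
        ext x
        constructor
        · rintro ⟨⟨z, hz, rfl⟩, hAx⟩
          refine ⟨z, ⟨hz, ?_⟩, rfl⟩
          show (fwdProd A m (m + 1 + n)).mulVec z ∈ ({y} : Set (Fin d → ℝ))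
          rw [Set.mem_singleton_iff, hsplit, ← Matrix.mulVec_mulVec]
          exact hAx
        · rintro ⟨z, ⟨hz, hzy⟩, rfl⟩
          refine ⟨⟨z, hz, rfl⟩, ?_⟩
          rw [Set.mem_singleton_iff, hsplit, ← Matrix.mulVec_mulVec] at hzy
          exact hzy
      have hFcompact : ∀ n, IsCompact (F n) := by
        intro n
        rw [hFeq n]
        refine IsCompact.image ?_ (continuous_mulVec _)
        exact isCompact_aux hd _ (fwdProd_pos hd A hA (by omega)) _ isClosed_singleton
          (∑ i, y i) (fun y' hy'' => by rw [Set.mem_singleton_iff] at hy''; rw [hy''])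
      have hFne : ∀ n, (F n).Nonempty := by
        intro n
        obtain ⟨z, hz, hzy⟩ := hy' (m + 1 + n) (by omega)
        refine ⟨(fwdProd A (m + 1) (m + 1 + n)).mulVec z, ⟨z, hz, rfl⟩, ?_⟩
        rw [Matrix.mulVec_mulVec, ← fwdProd_cons A (by omega)]
        exact hzy
      have hFdec : ∀ n, F (n + 1) ⊆ F n := by
        rintro n x ⟨hmem, hAx⟩
        exact ⟨image_antitone A hA (m + 1) (by omega) (by omega) hmem, hAx⟩
      obtain ⟨x, hx⟩ := IsCompact.nonempty_iInter_of_sequence_nonempty_isCompact_isClosed F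
        hFdec hFne (hFcompact 0) (fun n => (hFcompact n).isClosed)
      simp only [Set.mem_iInter] at hx
      refine ⟨x, ?_, (hx 0).2⟩
      rw [mem_limitCone_iff]
      intro n hn
      have h1 := (hx (n - (m + 1))).1
      rwa [show m + 1 + (n - (m + 1)) = n by omega] at h1
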